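/- Let P be a finite nonempty collection of cells and let [a,b] and [α,β] be inner intervals of P with a=(i,j), b=(k,l), β=b and α=(m,n)∈]a,b[; set c=(i,l), d=(k,j), γ=(m,l), δ=(k,n), h=(m,j) and r=(i,n). Let <^P be a P-order such that gcd(in(f_{a,b}), in(f_{α,β}))≠1. Then S(f_{a,b},f_{α,β}) reduces to 0 modulo G with respect to <^P_lex if and only if one of the following holds: (1) x_a x_γ x_δ <^P_lex x_α x_c x_d, and either both h <^P α and δ <^P α, or both h <^P d and δ <^P d; (2) x_a x_γ x_δ <^P_lex x_α x_c x_d, the set {r,h,a,α} is the vertex set of an inner interval of P, and either both r <^P α and γ <^P α, or both r <^P c and γ <^P c; (3) x_α x_c x_d <^P_lex x_a x_γ x_δ, and either both h <^P a and c <^P a, or both h <^P γ and c <^P γ; (4) x_α x_c x_d <^P_lex x_a x_γ x_δ, the set {r,h,a,α} is the vertex set of an inner interval of P, and either both r <^P a and d <^P a, or both r <^P δ and d <^P δ. -/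

import Mathlib

namespace ClosedPathPaper

open MvPolynomial

/-- Lattice points of `ℤ²`; a cell is identified with its lower left corner. -/
abbrev Pt : Type := ℤ × ℤ

/-- The four vertices (corners) of the unit cell with lower left corner `a`. -/
def cellVerts (a : Pt) : Set Pt :=
  {a, (a.1 + 1, a.2), (a.1, a.2 + 1), (a.1 + 1, a.2 + 1)}

/-- The vertex set `V(P)` of a collection of cells `P`. -/
def VP (P : Finset Pt) : Set Pt := ⋃ a ∈ P, cellVerts a

/-- `[a,b]` is a proper interval and every cell contained in it belongs to `P`. -/
def IsInnerInterval (P : Finset Pt) (a b : Pt) : Prop :=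
  a.1 < b.1 ∧ a.2 < b.2 ∧
    ∀ c : Pt, a.1 ≤ c.1 → c.1 < b.1 → a.2 ≤ c.2 → c.2 < b.2 → c ∈ P

/-- The four corners of the proper interval `[a,b]`:
diagonal corners `a, b` and anti-diagonal corners `c = (a.1, b.2)`, `d = (b.1, a.2)`. -/
def cornersOf (a b : Pt) : Finset Pt := {a, b, (a.1, b.2), (b.1, a.2)}

/-- The inner 2-minor `f_{a,b} = x_a x_b - x_c x_d` attached to the inner interval `[a,b]`. -/
noncomputable def innerMinor (K : Type*) [Field K] (a b : Pt) : MvPolynomial Pt K :=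
  X a * X b - X (a.1, b.2) * X (b.1, a.2)

/-- The set `G` of all inner 2-minors of `P`. -/
def minorsSet (K : Type*) [Field K] (P : Finset Pt) : Set (MvPolynomial Pt K) :=
  {f | ∃ a b : Pt, IsInnerInterval P a b ∧ f = innerMinor K a b}

/-- The polyomino ideal `I_P`. -/
noncomputable def polyoIdeal (K : Type*) [Field K] (P : Finset Pt) :
    Ideal (MvPolynomial Pt K) :=
  Ideal.span (minorsSet K P)

/-! ### Monomial orders -/

/-- Strict lexicographic comparison of exponent vectors induced by the
(strict total) order `po` on the variables. -/
def lexLt (po : Pt → Pt → Prop) (u v : Pt →₀ ℕ) : Prop :=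
  ∃ w : Pt, u w < v w ∧ ∀ w' : Pt, po w w' → u w' = v w'

def lexLe (po : Pt → Pt → Prop) (u v : Pt →₀ ℕ) : Prop := u = v ∨ lexLt po u v

/-- `m` is the leading monomial of `f` with respect to the lexicographic order
induced by `po`. -/
def IsLM {K : Type*} [Field K] (po : Pt → Pt → Prop) (f : MvPolynomial Pt K)
    (m : Pt →₀ ℕ) : Prop :=
  m ∈ f.support ∧ ∀ m' ∈ f.support, lexLe po m' m

/-- `sp` is the S-polynomial of `f` and `g` with respect to the lexicographic
order induced by `po`. -/
def IsSPoly {K : Type*} [Field K] (po : Pt → Pt → Prop) (f g sp : MvPolynomial Pt K) : Prop :=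
  ∃ mf mg : Pt →₀ ℕ, IsLM po f mf ∧ IsLM po g mg ∧
    sp = monomial (mf ⊔ mg - mf) (f.coeff mf)⁻¹ * f
       - monomial (mf ⊔ mg - mg) (g.coeff mg)⁻¹ * g

/-- `h` has a standard expression with respect to `G`, i.e. `h` reduces to `0`
modulo `G` with respect to the lexicographic order induced by `po`. -/
def ReducesToZero {K : Type*} [Field K] (po : Pt → Pt → Prop)
    (G : Set (MvPolynomial Pt K)) (h : MvPolynomial Pt K) : Prop :=
  ∃ (F : Finset (MvPolynomial Pt K)) (q : MvPolynomial Pt K → MvPolynomial Pt K),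
    ↑F ⊆ G ∧ h = ∑ g ∈ F, q g * g ∧
    ∀ g ∈ F, ∀ m, IsLM po (q g * g) m → ∃ mh, IsLM po h mh ∧ lexLe po m mh

/-- The exponent vector of `x_u x_v x_w`. -/
noncomputable def mono3 (u v w : Pt) : Pt →₀ ℕ :=
  Finsupp.single u 1 + Finsupp.single v 1 + Finsupp.single w 1

/-- The leading monomials, viewed as polynomials, of the members of `G`. -/
def leadingMonomials {K : Type*} [Field K] (po : Pt → Pt → Prop)
    (G : Set (MvPolynomial Pt K)) : Set (MvPolynomial Pt K) :=
  {f | ∃ g ∈ G, ∃ m, IsLM po g m ∧ f = monomial m (1 : K)}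

/-- The initial ideal of `I` with respect to the lexicographic order induced by `po`. -/
noncomputable def initialIdeal {K : Type*} [Field K] (po : Pt → Pt → Prop)
    (I : Ideal (MvPolynomial Pt K)) : Ideal (MvPolynomial Pt K) :=
  Ideal.span (leadingMonomials po (I : Set (MvPolynomial Pt K)))

/-- `G` is a Gröbner basis of `I`. -/
def IsGroebnerBasis {K : Type*} [Field K] (po : Pt → Pt → Prop)
    (G : Set (MvPolynomial Pt K)) (I : Ideal (MvPolynomial Pt K)) : Prop :=
  Ideal.span G = I ∧ Ideal.span (leadingMonomials po G) = initialIdeal po I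

/-- `G` is the reduced Gröbner basis of `I` (up to normalizing signs). -/
def IsReducedGroebnerBasis {K : Type*} [Field K] (po : Pt → Pt → Prop)
    (G : Set (MvPolynomial Pt K)) (I : Ideal (MvPolynomial Pt K)) : Prop :=
  IsGroebnerBasis po G I ∧
  (∀ g ∈ G, ∃ m, IsLM po g m ∧ (g.coeff m = 1 ∨ g.coeff m = -1)) ∧
  (∀ g ∈ G, ∀ g' ∈ G, g' ≠ g → ∀ m ∈ g.support, ∀ m', IsLM po g' m' → ¬ m' ≤ m)

/-! ### Closed paths and special configurations -/

/-- Two cells share a common edge. -/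
def cellAdj (a b : Pt) : Prop :=
  b = (a.1 + 1, a.2) ∨ b = (a.1 - 1, a.2) ∨ b = (a.1, a.2 + 1) ∨ b = (a.1, a.2 - 1)

/-- `P` is a closed path polyomino. -/
def IsClosedPath (P : Finset Pt) : Prop :=
  ∃ n : ℕ, 5 < n ∧ ∃ A : ZMod n → Pt,
    Function.Injective A ∧
    (∀ i, cellAdj (A i) (A (i + 1))) ∧
    (∀ i j : ZMod n, j ≠ i - 2 → j ≠ i - 1 → j ≠ i → j ≠ i + 1 → j ≠ i + 2 →
      cellVerts (A i) ∩ cellVerts (A j) = ∅) ∧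
    ∀ c : Pt, c ∈ P ↔ ∃ i, A i = c

/-- The horizontal block of rank `m` whose leftmost cell is `a`. -/
def hBlockCells (a : Pt) (m : ℕ) : Finset Pt :=
  (Finset.range m).image fun t : ℕ => (a.1 + (t : ℤ), a.2)

/-- The vertical block of rank `m` whose bottom cell is `a`. -/
def vBlockCells (a : Pt) (m : ℕ) : Finset Pt :=
  (Finset.range m).image fun t : ℕ => (a.1, a.2 + (t : ℤ))

/-- The vertex set of a finite set of cells. -/
def vertsOfCells (s : Finset Pt) : Set Pt := ⋃ c ∈ s, cellVerts c

/-- A W-pentomino of `P`: a horizontal block of rank two with leftmost cell `a₁`, a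
vertical block of rank two with bottom cell `a₂`, and a middle cell `A` not belonging to the
two blocks, such that the vertex sets of the two blocks meet exactly in the lower right
corner of `A`. -/
def IsWPentomino (P : Finset Pt) (a₁ a₂ A : Pt) : Prop :=
  hBlockCells a₁ 2 ⊆ P ∧ vBlockCells a₂ 2 ⊆ P ∧ A ∈ P ∧
  A ∉ hBlockCells a₁ 2 ∪ vBlockCells a₂ 2 ∧
  vertsOfCells (hBlockCells a₁ 2) ∩ vertsOfCells (vBlockCells a₂ 2) = {(A.1 + 1, A.2)}

/-- An RW-heptomino of `P`: a horizontal block of rank three with leftmost cell `a₁`, a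
vertical block of rank three with bottom cell `a₂`, and a middle cell `A` not belonging to
the two blocks, such that the vertex sets of the two blocks meet exactly in the upper left
corner of `A`. -/
def IsRWHeptomino (P : Finset Pt) (a₁ a₂ A : Pt) : Prop :=
  hBlockCells a₁ 3 ⊆ P ∧ vBlockCells a₂ 3 ⊆ P ∧ A ∈ P ∧
  A ∉ hBlockCells a₁ 3 ∪ vBlockCells a₂ 3 ∧
  vertsOfCells (hBlockCells a₁ 3) ∩ vertsOfCells (vBlockCells a₂ 3) = {(A.1, A.2 + 1)}

/-- An LD-horizontal skew tetromino of `P` (base point `p`): the cells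
`p, p+(1,0), p+(1,1), p+(2,1)`. -/
def IsLDhTetromino (P : Finset Pt) (p : Pt) : Prop :=
  p ∈ P ∧ (p.1 + 1, p.2) ∈ P ∧ (p.1 + 1, p.2 + 1) ∈ P ∧ (p.1 + 2, p.2 + 1) ∈ P

/-- An LD-vertical skew tetromino of `P` (base point `p`): the cells
`p, p+(0,1), p+(1,1), p+(1,2)`. -/
def IsLDvTetromino (P : Finset Pt) (p : Pt) : Prop :=
  p ∈ P ∧ (p.1, p.2 + 1) ∈ P ∧ (p.1 + 1, p.2 + 1) ∈ P ∧ (p.1 + 1, p.2 + 2) ∈ P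

/-- An LD-horizontal skew hexomino of `P` (base point `p`): the cells
`p, p+(1,0), p+(2,0), p+(2,1), p+(3,1), p+(4,1)`. -/
def IsLDhHexomino (P : Finset Pt) (p : Pt) : Prop :=
  p ∈ P ∧ (p.1 + 1, p.2) ∈ P ∧ (p.1 + 2, p.2) ∈ P ∧
  (p.1 + 2, p.2 + 1) ∈ P ∧ (p.1 + 3, p.2 + 1) ∈ P ∧ (p.1 + 4, p.2 + 1) ∈ P

/-- An LD-vertical skew hexomino of `P` (base point `p`): the cells
`p, p+(0,1), p+(0,2), p+(1,2), p+(1,3), p+(1,4)`. -/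
def IsLDvHexomino (P : Finset Pt) (p : Pt) : Prop :=
  p ∈ P ∧ (p.1, p.2 + 1) ∈ P ∧ (p.1, p.2 + 2) ∈ P ∧
  (p.1 + 1, p.2 + 2) ∈ P ∧ (p.1 + 1, p.2 + 3) ∈ P ∧ (p.1 + 1, p.2 + 4) ∈ P

/-- The total order `<¹` on `ℤ²`. -/
def lt1 (a b : Pt) : Prop := a.1 < b.1 ∨ (a.1 = b.1 ∧ a.2 < b.2)

/-- The P-order `<^Y` attached to a set `Y` of vertices. -/
def Ylt (Y : Set Pt) (a b : Pt) : Prop :=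
  (a ∉ Y ∧ b ∈ Y) ∨ (a ∉ Y ∧ b ∉ Y ∧ lt1 a b) ∨ (a ∈ Y ∧ b ∈ Y ∧ lt1 a b)




section Lex
variable {po : Pt → Pt → Prop}

lemma po_asymm (hpo : IsStrictTotalOrder Pt po) {x y : Pt} (h1 : po x y) (h2 : po y x) : False := by
  haveI := hpo
  exact irrefl_of po x (trans_of po h1 h2)

lemma po_max (hpo : IsStrictTotalOrder Pt po) (s : Finset Pt) (hs : s.Nonempty) :
    ∃ w ∈ s, ∀ w' ∈ s, w' ≠ w → po w' w := by
  haveI := hpo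
  induction s using Finset.induction with
  | empty => simp at hs
  | @insert x s hxs ih =>
    rcases s.eq_empty_or_nonempty with rfl | hne
    · exact ⟨x, by simp, by simp⟩
    · obtain ⟨w, hw, hmax⟩ := ih hne
      rcases trichotomous_of po x w with h | h | h
      · refine ⟨w, Finset.mem_insert_of_mem hw, ?_⟩
        intro w' hw' hne'
        rcases Finset.mem_insert.1 hw' with rfl | hw'
        · exact h
        · exact hmax w' hw' hne'
      · rcases h with rfl
        exact ⟨x, Finset.mem_insert_self x s, fun w' hw' hne' =>
          hmax w' ((Finset.mem_insert.1 hw').resolve_left hne') hne'⟩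
      · refine ⟨x, Finset.mem_insert_self x s, ?_⟩
        intro w' hw' hne'
        rcases Finset.mem_insert.1 hw' with rfl | hw'
        · exact absurd rfl hne'
        · by_cases hww : w' = w
          · subst hww; exact h
          · exact trans_of po (hmax w' hw' hww) h

lemma lexLt_total (hpo : IsStrictTotalOrder Pt po) (u v : Pt →₀ ℕ) :
    u = v ∨ lexLt po u v ∨ lexLt po v u := by
  haveI := hpo
  by_cases h : u = v
  · exact Or.inl h
  right
  have hD : ((u.support ∪ v.support).filter (fun w => u w ≠ v w)).Nonempty := by
    rw [Finset.filter_nonempty_iff]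
    by_contra hD
    push_neg at hD
    apply h
    ext w
    by_cases hw : w ∈ u.support ∪ v.support
    · by_contra hne; exact hne (hD w hw)
    · simp only [Finset.mem_union, Finsupp.mem_support_iff, not_or, not_not] at hw
      rw [hw.1, hw.2]
  obtain ⟨w, hw, hmax⟩ := po_max hpo _ hD
  have hwne : u w ≠ v w := (Finset.mem_filter.1 hw).2
  have heq : ∀ w', po w w' → u w' = v w' := by
    intro w' hww'
    by_contra hne
    have hmem : w' ∈ (u.support ∪ v.support).filter (fun w => u w ≠ v w) := by
      refine Finset.mem_filter.2 ⟨?_, hne⟩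
      simp only [Finset.mem_union, Finsupp.mem_support_iff]
      by_contra hc; push_neg at hc; rw [hc.1, hc.2] at hne; exact hne rfl
    have hne' : w' ≠ w := fun e => irrefl_of po w (e ▸ hww')
    exact po_asymm hpo hww' (hmax w' hmem hne')
  rcases Nat.lt_or_ge (u w) (v w) with h1 | h1
  · exact Or.inl ⟨w, h1, heq⟩
  · exact Or.inr ⟨w, lt_of_le_of_ne h1 (Ne.symm hwne), fun w' hw' => (heq w' hw').symm⟩

lemma lexLt_trans (hpo : IsStrictTotalOrder Pt po) {u v t : Pt →₀ ℕ}
    (h1 : lexLt po u v) (h2 : lexLt po v t) : lexLt po u t := by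
  haveI := hpo
  obtain ⟨w1, hlt1, heq1⟩ := h1
  obtain ⟨w2, hlt2, heq2⟩ := h2
  rcases trichotomous_of po w1 w2 with h | h | h
  · exact ⟨w2, by rw [heq1 w2 h]; exact hlt2,
      fun w' hw' => by rw [heq1 w' (trans_of po h hw'), heq2 w' hw']⟩
  · subst h
    exact ⟨w1, lt_trans hlt1 hlt2, fun w' hw' => by rw [heq1 w' hw', heq2 w' hw']⟩
  · exact ⟨w1, by rw [← heq2 w1 h]; exact hlt1,
      fun w' hw' => by rw [heq1 w' hw', heq2 w' (trans_of po h hw')]⟩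

lemma lexLt_irrefl {u : Pt →₀ ℕ} (h : lexLt po u u) : False := by
  obtain ⟨w, hw, -⟩ := h; exact lt_irrefl _ hw

lemma lexLt_asymm (hpo : IsStrictTotalOrder Pt po) {u v : Pt →₀ ℕ}
    (h1 : lexLt po u v) (h2 : lexLt po v u) : False :=
  lexLt_irrefl (lexLt_trans hpo h1 h2)

lemma lexLe_refl (u : Pt →₀ ℕ) : lexLe po u u := Or.inl rfl

lemma lexLt_of_le_ne (hpo : IsStrictTotalOrder Pt po) {u v : Pt →₀ ℕ}
    (h : lexLe po u v) (hne : u ≠ v) : lexLt po u v := h.resolve_left hne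

lemma lexLt_of_lt_of_le (hpo : IsStrictTotalOrder Pt po) {u v t : Pt →₀ ℕ}
    (h1 : lexLt po u v) (h2 : lexLe po v t) : lexLt po u t := by
  rcases h2 with rfl | h2
  · exact h1
  · exact lexLt_trans hpo h1 h2

lemma lexLe_trans (hpo : IsStrictTotalOrder Pt po) {u v t : Pt →₀ ℕ}
    (h1 : lexLe po u v) (h2 : lexLe po v t) : lexLe po u t := by
  rcases h1 with rfl | h1
  · exact h2
  · exact Or.inr (lexLt_of_lt_of_le hpo h1 h2)

lemma lexLe_antisymm (hpo : IsStrictTotalOrder Pt po) {u v : Pt →₀ ℕ}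
    (h1 : lexLe po u v) (h2 : lexLe po v u) : u = v := by
  rcases h1 with rfl | h1
  · rfl
  · rcases h2 with rfl | h2
    · rfl
    · exact absurd h2 (fun h => lexLt_asymm hpo h1 h)

lemma lexLt_add_right (hpo : IsStrictTotalOrder Pt po) {u v : Pt →₀ ℕ} (w : Pt →₀ ℕ)
    (h : lexLt po u v) : lexLt po (u + w) (v + w) := by
  obtain ⟨x, hx, heq⟩ := h
  exact ⟨x, by simp only [Finsupp.add_apply]; omega,
    fun w' hw' => by simp only [Finsupp.add_apply, heq w' hw']⟩

lemma lexLe_add_right (hpo : IsStrictTotalOrder Pt po) {u v : Pt →₀ ℕ} (w : Pt →₀ ℕ)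
    (h : lexLe po u v) : lexLe po (u + w) (v + w) := by
  rcases h with rfl | h
  · exact lexLe_refl _
  · exact Or.inr (lexLt_add_right hpo w h)

lemma lex_max (hpo : IsStrictTotalOrder Pt po) (s : Finset (Pt →₀ ℕ)) (hs : s.Nonempty) :
    ∃ m ∈ s, ∀ m' ∈ s, lexLe po m' m := by
  induction s using Finset.induction with
  | empty => simp at hs
  | @insert x s hxs ih =>
    rcases s.eq_empty_or_nonempty with rfl | hne
    · exact ⟨x, by simp, by simp [lexLe_refl]⟩
    · obtain ⟨w, hw, hmax⟩ := ih hne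
      rcases lexLt_total hpo x w with rfl | h | h
      · exact ⟨x, Finset.mem_insert_self x s, fun m' hm' => by
          rcases Finset.mem_insert.1 hm' with rfl | hm'
          · exact lexLe_refl _
          · exact hmax m' hm'⟩
      · exact ⟨w, Finset.mem_insert_of_mem hw, fun m' hm' => by
          rcases Finset.mem_insert.1 hm' with rfl | hm'
          · exact Or.inr h
          · exact hmax m' hm'⟩
      · exact ⟨x, Finset.mem_insert_self x s, fun m' hm' => by
          rcases Finset.mem_insert.1 hm' with rfl | hm'
          · exact lexLe_refl _
          · exact lexLe_trans hpo (hmax m' hm') (Or.inr h)⟩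

end Lex

section LM
variable {K : Type*} [Field K] {po : Pt → Pt → Prop}

lemma isLM_unique (hpo : IsStrictTotalOrder Pt po) {f : MvPolynomial Pt K} {m m' : Pt →₀ ℕ}
    (h : IsLM po f m) (h' : IsLM po f m') : m = m' :=
  lexLe_antisymm hpo (h'.2 m h.1) (h.2 m' h'.1)

lemma isLM_exists (hpo : IsStrictTotalOrder Pt po) {f : MvPolynomial Pt K} (hf : f ≠ 0) :
    ∃ m, IsLM po f m := by
  have hne : f.support.Nonempty := by
    rw [Finset.nonempty_iff_ne_empty]
    intro h
    exact hf (MvPolynomial.support_eq_empty.1 h)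
  obtain ⟨m, hm, hmax⟩ := lex_max hpo f.support hne
  exact ⟨m, hm, hmax⟩

lemma isLM_mul (hpo : IsStrictTotalOrder Pt po) {f g : MvPolynomial Pt K} {mf mg : Pt →₀ ℕ}
    (hf : IsLM po f mf) (hg : IsLM po g mg) : IsLM po (f * g) (mf + mg) := by
  constructor
  · rw [MvPolynomial.mem_support_iff, MvPolynomial.coeff_mul]
    have hmem : (mf, mg) ∈ Finset.HasAntidiagonal.antidiagonal (mf + mg) := Finset.HasAntidiagonal.mem_antidiagonal.2 rfl
    have hz : ∀ p ∈ Finset.HasAntidiagonal.antidiagonal (mf + mg), p ≠ (mf, mg) →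
        MvPolynomial.coeff p.1 f * MvPolynomial.coeff p.2 g = 0 := by
      intro p hp hne
      by_contra hc
      have h1 : MvPolynomial.coeff p.1 f ≠ 0 := fun h => hc (by rw [h, zero_mul])
      have h2 : MvPolynomial.coeff p.2 g ≠ 0 := fun h => hc (by rw [h, mul_zero])
      have hps : p.1 + p.2 = mf + mg := Finset.HasAntidiagonal.mem_antidiagonal.1 hp
      have hle1 : lexLe po p.1 mf := hf.2 p.1 (MvPolynomial.mem_support_iff.2 h1)
      have hle2 : lexLe po p.2 mg := hg.2 p.2 (MvPolynomial.mem_support_iff.2 h2)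
      rcases hle1 with h1' | h1'
      · rcases hle2 with h2' | h2'
        · exact hne (Prod.ext h1' h2')
        · have hlt : lexLt po (p.2 + p.1) (mg + p.1) := lexLt_add_right hpo _ h2'
          rw [add_comm p.2 p.1, hps, h1', add_comm mf mg] at hlt
          exact lexLt_irrefl hlt
      · have hlt : lexLt po (p.1 + p.2) (mf + p.2) := lexLt_add_right hpo _ h1'
        have hle : lexLe po (mf + p.2) (mf + mg) := by
          rw [add_comm mf p.2, add_comm mf mg]; exact lexLe_add_right hpo _ hle2
        have hc2 := lexLt_of_lt_of_le hpo hlt hle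
        rw [hps] at hc2
        exact lexLt_irrefl hc2
    rw [Finset.sum_eq_single_of_mem (mf, mg) hmem hz]
    exact mul_ne_zero (MvPolynomial.mem_support_iff.1 hf.1) (MvPolynomial.mem_support_iff.1 hg.1)
  · intro m hm
    obtain ⟨m1, hm1, m2, hm2, rfl⟩ := Finset.mem_add.1 (MvPolynomial.support_mul f g hm)
    have h1 : lexLe po m1 mf := hf.2 m1 hm1
    have h2 : lexLe po m2 mg := hg.2 m2 hm2
    refine lexLe_trans hpo (lexLe_add_right hpo m2 h1) ?_
    rw [add_comm mf m2, add_comm mf mg]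
    exact lexLe_add_right hpo _ h2

/-- exponent vector of `x_u x_v` -/
noncomputable def vec2 (u v : Pt) : Pt →₀ ℕ := Finsupp.single u 1 + Finsupp.single v 1

lemma vec2_apply (p q w : Pt) :
    vec2 p q w = (if p = w then 1 else 0) + (if q = w then 1 else 0) := by
  simp [vec2, Finsupp.single_apply]

lemma vec2_comm (p q : Pt) : vec2 p q = vec2 q p := add_comm _ _

lemma mono3_apply (u v w x : Pt) :
    mono3 u v w x = ((if u = x then 1 else 0) + (if v = x then 1 else 0)) +
      (if w = x then 1 else 0) := by
  simp [mono3, Finsupp.single_apply]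

lemma mono3_eq_vec2_add (u v w : Pt) : mono3 u v w = vec2 u v + Finsupp.single w 1 := rfl

lemma vec2_ne {p q s t : Pt} (hps : p ≠ s) (hpt : p ≠ t) : vec2 p q ≠ vec2 s t := by
  intro h
  have h2 : vec2 p q p = vec2 s t p := by rw [h]
  rw [vec2_apply p q p, vec2_apply s t p, if_pos rfl, if_neg (Ne.symm hps),
    if_neg (Ne.symm hpt)] at h2
  omega

lemma coeff_binom (u v m : Pt →₀ ℕ) :
    MvPolynomial.coeff m (MvPolynomial.monomial u (1 : K) - MvPolynomial.monomial v 1) =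
      (if u = m then 1 else 0) - (if v = m then 1 else 0) := by
  classical
  rw [MvPolynomial.coeff_sub, MvPolynomial.coeff_monomial, MvPolynomial.coeff_monomial]

lemma support_binom {u v : Pt →₀ ℕ} (huv : u ≠ v) :
    (MvPolynomial.monomial u (1 : K) - MvPolynomial.monomial v 1).support = {u, v} := by
  classical
  ext m
  simp only [MvPolynomial.mem_support_iff, coeff_binom, Finset.mem_insert, Finset.mem_singleton]
  by_cases h1 : u = m
  · subst h1
    simp [Ne.symm huv]
  · by_cases h2 : v = m
    · subst h2
      simp [h1]
    · have h1' : m ≠ u := fun e => h1 e.symm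
      have h2' : m ≠ v := fun e => h2 e.symm
      simp [h1, h2, h1', h2']

lemma binom_ne_zero {u v : Pt →₀ ℕ} (huv : u ≠ v) :
    (MvPolynomial.monomial u (1 : K) - MvPolynomial.monomial v 1) ≠ 0 := by
  intro h
  have h2 := support_binom (K := K) huv
  rw [h, MvPolynomial.support_zero] at h2
  exact Finset.insert_ne_empty u {v} h2.symm

lemma isLM_binom (hpo : IsStrictTotalOrder Pt po) {u v : Pt →₀ ℕ} (h : lexLt po v u) :
    IsLM po (MvPolynomial.monomial u (1 : K) - MvPolynomial.monomial v 1) u := by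
  have huv : u ≠ v := fun e => lexLt_irrefl (e ▸ h)
  constructor
  · rw [support_binom huv]; simp
  · intro m hm
    rw [support_binom huv] at hm
    rcases Finset.mem_insert.1 hm with rfl | hm
    · exact lexLe_refl _
    · rw [Finset.mem_singleton.1 hm]; exact Or.inr h

lemma isLM_binom_cases {u v m : Pt →₀ ℕ} (huv : u ≠ v)
    (h : IsLM po (MvPolynomial.monomial u (1 : K) - MvPolynomial.monomial v 1) m) :
    m = u ∨ m = v := by
  have h2 := h.1
  rw [support_binom huv] at h2
  rcases Finset.mem_insert.1 h2 with h' | h'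
  · exact Or.inl h'
  · exact Or.inr (Finset.mem_singleton.1 h')

lemma coeff_binom_left {u v : Pt →₀ ℕ} (huv : u ≠ v) :
    MvPolynomial.coeff u (MvPolynomial.monomial u (1 : K) - MvPolynomial.monomial v 1) = 1 := by
  rw [coeff_binom, if_pos rfl, if_neg (Ne.symm huv), sub_zero]

lemma X_eq (u : Pt) : (MvPolynomial.X u : MvPolynomial Pt K) =
    MvPolynomial.monomial (Finsupp.single u 1) 1 := rfl

lemma monomial_vec2 (u v : Pt) :
    MvPolynomial.monomial (vec2 u v) (1 : K) = MvPolynomial.X u * MvPolynomial.X v := by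
  rw [X_eq, X_eq, MvPolynomial.monomial_mul, one_mul, vec2]

lemma monomial_mono3 (u v w : Pt) :
    MvPolynomial.monomial (mono3 u v w) (1 : K) =
      MvPolynomial.X u * MvPolynomial.X v * MvPolynomial.X w := by
  rw [X_eq, X_eq, X_eq, MvPolynomial.monomial_mul, MvPolynomial.monomial_mul, one_mul, one_mul,
    mono3]

lemma innerMinor_eq (a b : Pt) :
    innerMinor K a b = MvPolynomial.monomial (vec2 a b) 1 -
      MvPolynomial.monomial (vec2 (a.1, b.2) (b.1, a.2)) 1 := by
  rw [innerMinor, monomial_vec2, monomial_vec2]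

lemma lexLt_vec2_of_max (hpo : IsStrictTotalOrder Pt po) {p q s t w0 : Pt}
    (hw0 : w0 = s ∨ w0 = t) (hp : po p w0) (hq : po q w0)
    (hs : s = w0 ∨ po s w0) (ht : t = w0 ∨ po t w0) :
    lexLt po (vec2 p q) (vec2 s t) := by
  haveI := hpo
  have hw0p : p ≠ w0 := fun e => irrefl_of po w0 (e ▸ hp)
  have hw0q : q ≠ w0 := fun e => irrefl_of po w0 (e ▸ hq)
  refine ⟨w0, ?_, ?_⟩
  · have e1 : vec2 p q w0 = 0 := by rw [vec2_apply, if_neg hw0p, if_neg hw0q]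
    have e2 : 0 < vec2 s t w0 := by
      rcases hw0 with h | h
      · rw [vec2_apply, if_pos h.symm]; omega
      · rw [vec2_apply, if_pos h.symm]; omega
    omega
  · intro w' hw'
    have hne : ∀ x : Pt, (x = w0 ∨ po x w0) → x ≠ w' := by
      rintro x (rfl | hx) e
      · exact irrefl_of po w' (e ▸ hw')
      · exact po_asymm hpo hw' (e ▸ hx)
    rw [vec2_apply, vec2_apply, if_neg (hne p (Or.inr hp)), if_neg (hne q (Or.inr hq)),
      if_neg (hne s hs), if_neg (hne t ht)]

lemma lexLt_vec2_iff (hpo : IsStrictTotalOrder Pt po) {p q s t : Pt}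
    (hps : p ≠ s) (hpt : p ≠ t) (hqs : q ≠ s) (hqt : q ≠ t) (hst : s ≠ t) :
    lexLt po (vec2 p q) (vec2 s t) ↔ (po p s ∧ po q s) ∨ (po p t ∧ po q t) := by
  haveI := hpo
  constructor
  · rintro ⟨w, hlt, heq⟩
    have hw : w = s ∨ w = t := by
      by_contra hc
      push_neg at hc
      rw [vec2_apply s t w, if_neg (fun e : s = w => hc.1 e.symm),
        if_neg (fun e : t = w => hc.2 e.symm)] at hlt
      omega
    have keyp : po w p → False := by
      intro hwx
      have h2 := heq p hwx
      rw [vec2_apply p q p, vec2_apply s t p, if_pos rfl, if_neg (Ne.symm hps),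
        if_neg (Ne.symm hpt)] at h2
      omega
    have keyq : po w q → False := by
      intro hwx
      have h2 := heq q hwx
      rw [vec2_apply p q q, vec2_apply s t q, if_pos rfl, if_neg (Ne.symm hqs),
        if_neg (Ne.symm hqt)] at h2
      omega
    have hpw : po p w := by
      rcases trichotomous_of po p w with h | h | h
      · exact h
      · exfalso
        rcases hw with e | e
        · exact hps (h.trans e)
        · exact hpt (h.trans e)
      · exact (keyp h).elim
    have hqw : po q w := by
      rcases trichotomous_of po q w with h | h | h
      · exact h
      · exfalso
        rcases hw with e | e
        · exact hqs (h.trans e)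
        · exact hqt (h.trans e)
      · exact (keyq h).elim
    rcases hw with e | e
    · exact Or.inl ⟨e ▸ hpw, e ▸ hqw⟩
    · exact Or.inr ⟨e ▸ hpw, e ▸ hqw⟩
  · rintro (⟨h1, h2⟩ | ⟨h1, h2⟩)
    · rcases trichotomous_of po s t with h | h | h
      · exact lexLt_vec2_of_max hpo (Or.inr rfl) (trans_of po h1 h) (trans_of po h2 h)
          (Or.inr h) (Or.inl rfl)
      · exact absurd h hst
      · exact lexLt_vec2_of_max hpo (Or.inl rfl) h1 h2 (Or.inl rfl) (Or.inr h)
    · rcases trichotomous_of po s t with h | h | h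
      · exact lexLt_vec2_of_max hpo (Or.inr rfl) h1 h2 (Or.inr h) (Or.inl rfl)
      · exact absurd h hst
      · exact lexLt_vec2_of_max hpo (Or.inl rfl) (trans_of po h1 h) (trans_of po h2 h)
          (Or.inl rfl) (Or.inr h)

end LM


section Helpers
variable {K : Type*} [Field K] {po : Pt → Pt → Prop}

open MvPolynomial

lemma inner_sub {P : Finset Pt} {x1 y1 x2 y2 u1 w1 u2 w2 : ℤ}
    (h : IsInnerInterval P (x1, y1) (x2, y2))
    (h1 : x1 ≤ u1) (h2 : u1 < u2) (h3 : u2 ≤ x2)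
    (h4 : y1 ≤ w1) (h5 : w1 < w2) (h6 : w2 ≤ y2) :
    IsInnerInterval P (u1, w1) (u2, w2) :=
  ⟨h2, h5, fun c hc1 hc2 hc3 hc4 => h.2.2 c (le_trans h1 hc1) (lt_of_lt_of_le hc2 h3)
    (le_trans h4 hc3) (lt_of_lt_of_le hc4 h6)⟩

lemma pt_ne {x1 y1 x2 y2 : ℤ} (h : x1 ≠ x2 ∨ y1 ≠ y2) : ((x1, y1) : Pt) ≠ (x2, y2) := by
  intro e
  rw [Prod.mk.injEq] at e
  rcases h with h | h
  · exact h e.1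
  · exact h e.2

lemma vec2_pos {p q w : Pt} (h : 0 < vec2 p q w) : w = p ∨ w = q := by
  by_contra hc
  push_neg at hc
  rw [vec2_apply, if_neg (Ne.symm hc.1), if_neg (Ne.symm hc.2)] at h
  omega

lemma mono3_pos {u v w x : Pt} (h : 0 < mono3 u v w x) : x = u ∨ x = v ∨ x = w := by
  by_contra hc
  push_neg at hc
  rw [mono3_apply, if_neg (Ne.symm hc.1), if_neg (Ne.symm hc.2.1),
    if_neg (Ne.symm hc.2.2)] at h
  omega

lemma mono3_le_one {u v w : Pt} (h1 : u ≠ v) (h2 : u ≠ w) (h3 : v ≠ w) (x : Pt) :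
    mono3 u v w x ≤ 1 := by
  rw [mono3_apply]
  by_cases hu : u = x <;> by_cases hv : v = x <;> by_cases hw : w = x <;> simp_all

lemma mono3_ne {u v w s t r : Pt} (h1 : u ≠ s) (h2 : u ≠ t) (h3 : u ≠ r) :
    mono3 u v w ≠ mono3 s t r := by
  intro h
  have h2' : mono3 u v w u = mono3 s t r u := by rw [h]
  rw [mono3_apply u v w u, mono3_apply s t r u, if_pos rfl, if_neg (Ne.symm h1),
    if_neg (Ne.symm h2), if_neg (Ne.symm h3)] at h2'
  omega

lemma mono3_comm12 (u v w : Pt) : mono3 u v w = mono3 v u w := by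
  ext x
  rw [mono3_apply, mono3_apply]
  omega

lemma mono3_comm23 (u v w : Pt) : mono3 u v w = mono3 u w v := by
  ext x
  rw [mono3_apply, mono3_apply]
  omega

lemma mono3_rot (u v w : Pt) : mono3 u v w = mono3 v w u := by
  ext x
  rw [mono3_apply, mono3_apply]
  omega

lemma sup_vec2_sub_left {A B Al : Pt} (h1 : Al ≠ A) (h2 : Al ≠ B) :
    vec2 A B ⊔ vec2 Al B - vec2 A B = Finsupp.single Al 1 := by
  ext x
  rw [Finsupp.tsub_apply, Finsupp.sup_apply, vec2_apply A B x, vec2_apply Al B x,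
    Finsupp.single_apply]
  by_cases hAl : Al = x
  · rw [if_pos hAl, if_neg (fun e : A = x => h1 (hAl.trans e.symm)),
      if_neg (fun e : B = x => h2 (hAl.trans e.symm))]
    decide
  · rw [if_neg hAl]
    split_ifs <;> decide

lemma sup_vec2_sub_right {A B Al : Pt} (h1 : Al ≠ A) (h2 : Al ≠ B) :
    vec2 A B ⊔ vec2 Al B - vec2 Al B = Finsupp.single A 1 := by
  ext x
  rw [Finsupp.tsub_apply, Finsupp.sup_apply, vec2_apply A B x, vec2_apply Al B x,
    Finsupp.single_apply]
  by_cases hAl : Al = x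
  · rw [if_pos hAl, if_neg (fun e : A = x => h1 (hAl.trans e.symm)),
      if_neg (fun e : B = x => h2 (hAl.trans e.symm))]
    decide
  · rw [if_neg hAl]
    split_ifs <;> decide

lemma isLM_binom' (hpo : IsStrictTotalOrder Pt po) {u v : Pt →₀ ℕ} (h : lexLt po u v) :
    IsLM po (MvPolynomial.monomial u (1 : K) - MvPolynomial.monomial v 1) v := by
  have huv : u ≠ v := fun e => lexLt_irrefl (e ▸ h)
  constructor
  · rw [support_binom huv]; simp
  · intro m hm
    rw [support_binom huv] at hm
    rcases Finset.mem_insert.1 hm with rfl | hm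
    · exact Or.inr h
    · rw [Finset.mem_singleton.1 hm]
      exact lexLe_refl _

lemma not_reduces (hpo : IsStrictTotalOrder Pt po) {G : Set (MvPolynomial Pt K)}
    {h : MvPolynomial Pt K} {M : Pt →₀ ℕ} (hLM : IsLM po h M)
    (hclass : ∀ x ∈ G, ∀ mx, IsLM po x mx → (∀ w, mx w ≤ M w) → False) :
    ¬ ReducesToZero po G h := by
  rintro ⟨F, q, hFG, hsum, hstd⟩
  have hM0 : MvPolynomial.coeff M h ≠ 0 := MvPolynomial.mem_support_iff.1 hLM.1
  have hzero : ∀ x ∈ F, MvPolynomial.coeff M (q x * x) = 0 := by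
    intro x hx
    by_contra hc
    have hx0 : q x * x ≠ 0 := fun e => hc (by rw [e, MvPolynomial.coeff_zero])
    obtain ⟨mx, hmx⟩ := isLM_exists hpo hx0
    obtain ⟨mh, hmh, hle⟩ := hstd x hx mx hmx
    have hmh' : mh = M := isLM_unique hpo hmh hLM
    have hle' : lexLe po mx M := hmh' ▸ hle
    have h1 : lexLe po M mx := hmx.2 M (MvPolynomial.mem_support_iff.2 hc)
    have hmx1 : mx = M := lexLe_antisymm hpo hle' h1
    have hq0 : q x ≠ 0 := fun e => hx0 (by rw [e, zero_mul])
    have hxx0 : x ≠ 0 := fun e => hx0 (by rw [e, mul_zero])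
    obtain ⟨mq, hmq⟩ := isLM_exists hpo hq0
    obtain ⟨mxx, hmxx⟩ := isLM_exists hpo hxx0
    have hmul := isLM_mul hpo hmq hmxx
    have heqm : M = mq + mxx := isLM_unique hpo (hmx1 ▸ hmx) hmul
    refine hclass x (hFG hx) mxx hmxx (fun w => ?_)
    have h2 : M w = mq w + mxx w := by rw [heqm, Finsupp.add_apply]
    omega
  have hs : MvPolynomial.coeff M h = 0 := by
    rw [hsum, MvPolynomial.coeff_sum]
    exact Finset.sum_eq_zero hzero
  exact hM0 hs

lemma reduces_of_two (hpo : IsStrictTotalOrder Pt po) {G : Set (MvPolynomial Pt K)}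
    {g1 g2 : MvPolynomial Pt K} {w1 w2 : Pt} {u1 v1 u2 v2 : Pt →₀ ℕ}
    {h : MvPolynomial Pt K} {Mtop : Pt →₀ ℕ}
    (hG1 : g1 ∈ G) (hG2 : g2 ∈ G) (hne : g1 ≠ g2)
    (hg1 : g1 = MvPolynomial.monomial u1 1 - MvPolynomial.monomial v1 1)
    (hg2 : g2 = MvPolynomial.monomial u2 1 - MvPolynomial.monomial v2 1)
    (hu1 : u1 ≠ v1) (hu2 : u2 ≠ v2)
    (hLM : IsLM po h Mtop)
    (heq : h = MvPolynomial.X w1 * g1 + MvPolynomial.X w2 * g2)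
    (h1u : lexLe po (Finsupp.single w1 1 + u1) Mtop)
    (h1v : lexLe po (Finsupp.single w1 1 + v1) Mtop)
    (h2u : lexLe po (Finsupp.single w2 1 + u2) Mtop)
    (h2v : lexLe po (Finsupp.single w2 1 + v2) Mtop) :
    ReducesToZero po G h := by
  classical
  refine ⟨{g1, g2}, fun x => if x = g1 then MvPolynomial.X w1 else
    if x = g2 then MvPolynomial.X w2 else 0, ?_, ?_, ?_⟩
  · intro x hx
    rcases Finset.mem_insert.1 hx with rfl | hx'
    · exact hG1
    · rw [Finset.mem_singleton.1 hx']; exact hG2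
  · rw [Finset.sum_pair hne]
    beta_reduce
    rw [if_pos rfl, if_neg (Ne.symm hne), if_pos rfl]
    exact heq
  · intro x hx m hm
    refine ⟨Mtop, hLM, ?_⟩
    have key1 : MvPolynomial.X w1 * g1 =
        MvPolynomial.monomial (Finsupp.single w1 1 + u1) (1 : K) -
          MvPolynomial.monomial (Finsupp.single w1 1 + v1) 1 := by
      rw [hg1, X_eq, mul_sub, MvPolynomial.monomial_mul, MvPolynomial.monomial_mul, one_mul]
    have key2 : MvPolynomial.X w2 * g2 =
        MvPolynomial.monomial (Finsupp.single w2 1 + u2) (1 : K) -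
          MvPolynomial.monomial (Finsupp.single w2 1 + v2) 1 := by
      rw [hg2, X_eq, mul_sub, MvPolynomial.monomial_mul, MvPolynomial.monomial_mul, one_mul]
    rcases Finset.mem_insert.1 hx with rfl | hx'
    · beta_reduce at hm
      rw [if_pos rfl, key1] at hm
      have hne1 : Finsupp.single w1 1 + u1 ≠ Finsupp.single w1 1 + v1 :=
        fun e => hu1 (add_left_cancel e)
      rcases isLM_binom_cases hne1 hm with rfl | rfl
      · exact h1u
      · exact h1v
    · rw [Finset.mem_singleton.1 hx'] at hm
      beta_reduce at hm
      rw [if_neg (Ne.symm hne), if_pos rfl, key2] at hm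
      have hne2 : Finsupp.single w2 1 + u2 ≠ Finsupp.single w2 1 + v2 :=
        fun e => hu2 (add_left_cancel e)
      rcases isLM_binom_cases hne2 hm with rfl | rfl
      · exact h2u
      · exact h2v

lemma corners_eq (i j m n : ℤ) :
    cornersOf (i,j) (m,n) = ({(i,n), (m,j), (i,j), (m,n)} : Finset Pt) := by
  ext x
  simp [cornersOf]
  tauto

end Helpers


theorem sPoly_reducesToZero_iff_case1
    (K : Type*) [Field K] (P : Finset Pt) (hP : P.Nonempty)
    (i j k l m n : ℤ)
    (a b c d α β γ δ h r : Pt)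
    (ha : a = (i, j)) (hb : b = (k, l)) (hc : c = (i, l)) (hd : d = (k, j))
    (hα : α = (m, n)) (hβ : β = b) (hγ : γ = (m, l)) (hδ : δ = (k, n))
    (hh : h = (m, j)) (hr : r = (i, n))
    (him : i < m) (hmk : m < k) (hjn : j < n) (hnl : n < l)
    (hab : IsInnerInterval P a b) (hαβ : IsInnerInterval P α β)
    (po : Pt → Pt → Prop) (hpo : IsStrictTotalOrder Pt po)
    (hgcd : ∃ mf mg : Pt →₀ ℕ, IsLM po (innerMinor K a b) mf ∧
      IsLM po (innerMinor K α β) mg ∧ ∃ w, 0 < mf w ∧ 0 < mg w) :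
    (∀ sp, IsSPoly po (innerMinor K a b) (innerMinor K α β) sp →
        ReducesToZero po (minorsSet K P) sp) ↔
      ((lexLt po (mono3 a γ δ) (mono3 α c d) ∧
          ((po h α ∧ po δ α) ∨ (po h d ∧ po δ d))) ∨
       (lexLt po (mono3 a γ δ) (mono3 α c d) ∧
          (∃ u v : Pt, IsInnerInterval P u v ∧ cornersOf u v = ({r, h, a, α} : Finset Pt)) ∧
          ((po r α ∧ po γ α) ∨ (po r c ∧ po γ c))) ∨
       (lexLt po (mono3 α c d) (mono3 a γ δ) ∧
          ((po h a ∧ po c a) ∨ (po h γ ∧ po c γ))) ∨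
       (lexLt po (mono3 α c d) (mono3 a γ δ) ∧
          (∃ u v : Pt, IsInnerInterval P u v ∧ cornersOf u v = ({r, h, a, α} : Finset Pt)) ∧
          ((po r a ∧ po d a) ∨ (po r δ ∧ po d δ)))) := by
  subst hβ hc hd hγ hδ hh hr ha hb hα
  have hiK : i < k := him.trans hmk
  have hjL : j < l := hjn.trans hnl
  -- binomial forms
  have hf_eq : innerMinor K (i,j) (k,l) =
      MvPolynomial.monomial (vec2 (i,j) (k,l)) 1 - MvPolynomial.monomial (vec2 (i,l) (k,j)) 1 :=
    innerMinor_eq _ _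
  have hg_eq : innerMinor K (m,n) (k,l) =
      MvPolynomial.monomial (vec2 (m,n) (k,l)) 1 - MvPolynomial.monomial (vec2 (m,l) (k,n)) 1 :=
    innerMinor_eq _ _
  have nf : vec2 ((i,j) : Pt) ((k,l) : Pt) ≠ vec2 (i,l) (k,j) :=
    vec2_ne (pt_ne (Or.inr (by omega))) (pt_ne (Or.inl (by omega)))
  have ng : vec2 ((m,n) : Pt) ((k,l) : Pt) ≠ vec2 (m,l) (k,n) :=
    vec2_ne (pt_ne (Or.inr (by omega))) (pt_ne (Or.inl (by omega)))
  -- leading monomials of the two minors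
  obtain ⟨mf, mg, hmf, hmg, w, hwf, hwg⟩ := hgcd
  have hwg4 : w = ((m,n) : Pt) ∨ w = ((k,l) : Pt) ∨ w = ((m,l) : Pt) ∨ w = ((k,n) : Pt) := by
    rcases isLM_binom_cases ng (hg_eq ▸ hmg) with e | e
    · rcases vec2_pos (e ▸ hwg) with h' | h'
      · exact Or.inl h'
      · exact Or.inr (Or.inl h')
    · rcases vec2_pos (e ▸ hwg) with h' | h'
      · exact Or.inr (Or.inr (Or.inl h'))
      · exact Or.inr (Or.inr (Or.inr h'))
  have hmf_eq : mf = vec2 (i,j) (k,l) := by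
    rcases isLM_binom_cases nf (hf_eq ▸ hmf) with e | e
    · exact e
    · exfalso
      rcases vec2_pos (e ▸ hwf) with h' | h' <;>
        rcases hwg4 with h'' | h'' | h'' | h'' <;>
          (rw [h''] at h'; rw [Prod.mk.injEq] at h'; omega)
  have hmg_eq : mg = vec2 (m,n) (k,l) := by
    rcases isLM_binom_cases ng (hg_eq ▸ hmg) with e | e
    · exact e
    · exfalso
      have hwf2 : w = ((i,j) : Pt) ∨ w = ((k,l) : Pt) := vec2_pos (hmf_eq ▸ hwf)
      rcases vec2_pos (e ▸ hwg) with h' | h' <;> rcases hwf2 with h'' | h'' <;>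
        (rw [h''] at h'; rw [Prod.mk.injEq] at h'; omega)
  have hfLM : IsLM po (innerMinor K (i,j) (k,l)) (vec2 (i,j) (k,l)) := hmf_eq ▸ hmf
  have hgLM : IsLM po (innerMinor K (m,n) (k,l)) (vec2 (m,n) (k,l)) := hmg_eq ▸ hmg
  have hcd : lexLt po (vec2 (i,l) (k,j)) (vec2 (i,j) (k,l)) := by
    have hmem : vec2 ((i,l) : Pt) ((k,j) : Pt) ∈ (innerMinor K (i,j) (k,l)).support := by
      rw [hf_eq, support_binom nf]; simp
    exact lexLt_of_le_ne hpo (hfLM.2 _ hmem)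
      (vec2_ne (pt_ne (Or.inr (by omega))) (pt_ne (Or.inl (by omega))))
  have hγδ : lexLt po (vec2 (m,l) (k,n)) (vec2 (m,n) (k,l)) := by
    have hmem : vec2 ((m,l) : Pt) ((k,n) : Pt) ∈ (innerMinor K (m,n) (k,l)).support := by
      rw [hg_eq, support_binom ng]; simp
    exact lexLt_of_le_ne hpo (hgLM.2 _ hmem)
      (vec2_ne (pt_ne (Or.inr (by omega))) (pt_ne (Or.inl (by omega))))
  -- the S-polynomial
  have hM12 : mono3 ((i,j) : Pt) (m,l) (k,n) ≠ mono3 (m,n) (i,l) (k,j) :=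
    mono3_ne (pt_ne (Or.inl (by omega))) (pt_ne (Or.inr (by omega))) (pt_ne (Or.inl (by omega)))
  have hsup_f : vec2 ((i,j) : Pt) ((k,l) : Pt) ⊔ vec2 (m,n) (k,l) - vec2 (i,j) (k,l) =
      Finsupp.single ((m,n) : Pt) 1 :=
    sup_vec2_sub_left (pt_ne (Or.inl (by omega))) (pt_ne (Or.inr (by omega)))
  have hsup_g : vec2 ((i,j) : Pt) ((k,l) : Pt) ⊔ vec2 (m,n) (k,l) - vec2 (m,n) (k,l) =
      Finsupp.single ((i,j) : Pt) 1 :=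
    sup_vec2_sub_right (pt_ne (Or.inl (by omega))) (pt_ne (Or.inr (by omega)))
  have hcf : MvPolynomial.coeff (vec2 (i,j) (k,l)) (innerMinor K (i,j) (k,l)) = 1 := by
    rw [hf_eq]; exact coeff_binom_left nf
  have hcg : MvPolynomial.coeff (vec2 (m,n) (k,l)) (innerMinor K (m,n) (k,l)) = 1 := by
    rw [hg_eq]; exact coeff_binom_left ng
  have hsp0_eq : (MvPolynomial.monomial (mono3 (i,j) (m,l) (k,n)) (1 : K) -
      MvPolynomial.monomial (mono3 (m,n) (i,l) (k,j)) 1) =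
      MvPolynomial.monomial (Finsupp.single ((m,n) : Pt) 1) 1 * innerMinor K (i,j) (k,l) -
      MvPolynomial.monomial (Finsupp.single ((i,j) : Pt) 1) 1 * innerMinor K (m,n) (k,l) := by
    rw [monomial_mono3, monomial_mono3, ← X_eq, ← X_eq]
    have e1 : innerMinor K (i,j) (k,l) = X (i,j) * X (k,l) - X (i,l) * X (k,j) := rfl
    have e2 : innerMinor K (m,n) (k,l) = X (m,n) * X (k,l) - X (m,l) * X (k,n) := rfl
    rw [e1, e2]; ring
  have hSP : ∀ sp, IsSPoly po (innerMinor K (i,j) (k,l)) (innerMinor K (m,n) (k,l)) sp ↔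
      sp = MvPolynomial.monomial (mono3 (i,j) (m,l) (k,n)) 1 -
        MvPolynomial.monomial (mono3 (m,n) (i,l) (k,j)) 1 := by
    intro sp
    constructor
    · rintro ⟨mf', mg', hmf', hmg', rfl⟩
      rw [isLM_unique hpo hmf' hfLM, isLM_unique hpo hmg' hgLM, hsup_f, hsup_g, hcf, hcg, inv_one]
      exact hsp0_eq.symm
    · rintro rfl
      refine ⟨_, _, hfLM, hgLM, ?_⟩
      rw [hsup_f, hsup_g, hcf, hcg, inv_one]
      exact hsp0_eq
  have hLHS : (∀ sp, IsSPoly po (innerMinor K (i,j) (k,l)) (innerMinor K (m,n) (k,l)) sp →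
      ReducesToZero po (minorsSet K P) sp) ↔
      ReducesToZero po (minorsSet K P)
        (MvPolynomial.monomial (mono3 (i,j) (m,l) (k,n)) 1 -
         MvPolynomial.monomial (mono3 (m,n) (i,l) (k,j)) 1) := by
    constructor
    · intro hred
      exact hred _ ((hSP _).2 rfl)
    · intro hred sp hsp
      rw [(hSP sp).1 hsp]
      exact hred
  rw [hLHS]
  -- inner intervals
  have hIaγ : IsInnerInterval P (i,j) (m,l) := inner_sub hab le_rfl him hmk.le le_rfl hjL le_rfl
  have hIhδ : IsInnerInterval P (m,j) (k,n) := inner_sub hab him.le hmk le_rfl le_rfl hjn hnl.le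
  have hIaδ : IsInnerInterval P (i,j) (k,n) := inner_sub hab le_rfl hiK le_rfl le_rfl hjn hnl.le
  have hIrγ : IsInnerInterval P (i,n) (m,l) := inner_sub hab le_rfl him hmk.le hjn.le hnl le_rfl
  have hIaα : IsInnerInterval P (i,j) (m,n) := inner_sub hab le_rfl him hmk.le le_rfl hjn hnl.le
  have hcorn : ∃ u v : Pt, IsInnerInterval P u v ∧
      cornersOf u v = ({(i,n), (m,j), (i,j), (m,n)} : Finset Pt) :=
    ⟨(i,j), (m,n), hIaα, corners_eq i j m n⟩
  have hGaγ : innerMinor K (i,j) (m,l) ∈ minorsSet K P := ⟨_, _, hIaγ, rfl⟩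
  have hGhδ : innerMinor K (m,j) (k,n) ∈ minorsSet K P := ⟨_, _, hIhδ, rfl⟩
  have hGaδ : innerMinor K (i,j) (k,n) ∈ minorsSet K P := ⟨_, _, hIaδ, rfl⟩
  have hGrγ : innerMinor K (i,n) (m,l) ∈ minorsSet K P := ⟨_, _, hIrγ, rfl⟩
  -- binomial forms of the four auxiliary minors
  have hbin_aγ : innerMinor K (i,j) (m,l) =
      MvPolynomial.monomial (vec2 (i,j) (m,l)) 1 - MvPolynomial.monomial (vec2 (i,l) (m,j)) 1 :=
    innerMinor_eq _ _
  have hbin_hδ : innerMinor K (m,j) (k,n) =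
      MvPolynomial.monomial (vec2 (m,j) (k,n)) 1 - MvPolynomial.monomial (vec2 (m,n) (k,j)) 1 :=
    innerMinor_eq _ _
  have hbin_aδ : innerMinor K (i,j) (k,n) =
      MvPolynomial.monomial (vec2 (i,j) (k,n)) 1 - MvPolynomial.monomial (vec2 (i,n) (k,j)) 1 :=
    innerMinor_eq _ _
  have hbin_rγ : innerMinor K (i,n) (m,l) =
      MvPolynomial.monomial (vec2 (i,n) (m,l)) 1 - MvPolynomial.monomial (vec2 (i,l) (m,n)) 1 :=
    innerMinor_eq _ _
  have n_aγ : vec2 ((i,j) : Pt) ((m,l) : Pt) ≠ vec2 (i,l) (m,j) :=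
    vec2_ne (pt_ne (Or.inr (by omega))) (pt_ne (Or.inl (by omega)))
  have n_hδ : vec2 ((m,j) : Pt) ((k,n) : Pt) ≠ vec2 (m,n) (k,j) :=
    vec2_ne (pt_ne (Or.inr (by omega))) (pt_ne (Or.inl (by omega)))
  have n_aδ : vec2 ((i,j) : Pt) ((k,n) : Pt) ≠ vec2 (i,n) (k,j) :=
    vec2_ne (pt_ne (Or.inr (by omega))) (pt_ne (Or.inl (by omega)))
  have n_rγ : vec2 ((i,n) : Pt) ((m,l) : Pt) ≠ vec2 (i,l) (m,n) :=
    vec2_ne (pt_ne (Or.inr (by omega))) (pt_ne (Or.inl (by omega)))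
  have hne12 : innerMinor K (i,j) (m,l) ≠ innerMinor K (m,j) (k,n) := by
    intro e
    have h2 : MvPolynomial.coeff (vec2 (i,j) (m,l)) (innerMinor K (i,j) (m,l)) =
        MvPolynomial.coeff (vec2 (i,j) (m,l)) (innerMinor K (m,j) (k,n)) := by rw [e]
    rw [hbin_aγ, coeff_binom_left n_aγ, hbin_hδ, coeff_binom,
      if_neg (vec2_ne (pt_ne (Or.inl (by omega))) (pt_ne (Or.inr (by omega)))),
      if_neg (vec2_ne (pt_ne (Or.inl (by omega))) (pt_ne (Or.inr (by omega))))] at h2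
    norm_num at h2
  have hne34 : innerMinor K (i,j) (k,n) ≠ innerMinor K (i,n) (m,l) := by
    intro e
    have h2 : MvPolynomial.coeff (vec2 (i,j) (k,n)) (innerMinor K (i,j) (k,n)) =
        MvPolynomial.coeff (vec2 (i,j) (k,n)) (innerMinor K (i,n) (m,l)) := by rw [e]
    rw [hbin_aδ, coeff_binom_left n_aδ, hbin_rγ, coeff_binom,
      if_neg (vec2_ne (pt_ne (Or.inr (by omega))) (pt_ne (Or.inl (by omega)))),
      if_neg (vec2_ne (pt_ne (Or.inr (by omega))) (pt_ne (Or.inl (by omega))))] at h2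
    norm_num at h2
  -- decomposition identities
  have hid1 : (MvPolynomial.monomial (mono3 (i,j) (m,l) (k,n)) (1 : K) -
      MvPolynomial.monomial (mono3 (m,n) (i,l) (k,j)) 1) =
      X (k,n) * innerMinor K (i,j) (m,l) + X (i,l) * innerMinor K (m,j) (k,n) := by
    rw [monomial_mono3, monomial_mono3]
    have e1 : innerMinor K (i,j) (m,l) = X (i,j) * X (m,l) - X (i,l) * X (m,j) := rfl
    have e2 : innerMinor K (m,j) (k,n) = X (m,j) * X (k,n) - X (m,n) * X (k,j) := rfl
    rw [e1, e2]; ring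
  have hid2 : (MvPolynomial.monomial (mono3 (i,j) (m,l) (k,n)) (1 : K) -
      MvPolynomial.monomial (mono3 (m,n) (i,l) (k,j)) 1) =
      X (m,l) * innerMinor K (i,j) (k,n) + X (k,j) * innerMinor K (i,n) (m,l) := by
    rw [monomial_mono3, monomial_mono3]
    have e1 : innerMinor K (i,j) (k,n) = X (i,j) * X (k,n) - X (i,n) * X (k,j) := rfl
    have e2 : innerMinor K (i,n) (m,l) = X (i,n) * X (m,l) - X (i,l) * X (m,n) := rfl
    rw [e1, e2]; ring
  -- pair order characterizations
  have hiff1 : lexLt po (vec2 (m,j) (k,n)) (vec2 (m,n) (k,j)) ↔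
      ((po (m,j) (m,n) ∧ po (k,n) (m,n)) ∨ (po (m,j) (k,j) ∧ po (k,n) (k,j))) :=
    lexLt_vec2_iff hpo (pt_ne (Or.inr (by omega))) (pt_ne (Or.inl (by omega)))
      (pt_ne (Or.inl (by omega))) (pt_ne (Or.inr (by omega))) (pt_ne (Or.inl (by omega)))
  have hiff2 : lexLt po (vec2 (i,n) (m,l)) (vec2 (m,n) (i,l)) ↔
      ((po (i,n) (m,n) ∧ po (m,l) (m,n)) ∨ (po (i,n) (i,l) ∧ po (m,l) (i,l))) :=
    lexLt_vec2_iff hpo (pt_ne (Or.inl (by omega))) (pt_ne (Or.inr (by omega)))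
      (pt_ne (Or.inr (by omega))) (pt_ne (Or.inl (by omega))) (pt_ne (Or.inl (by omega)))
  have hiff3 : lexLt po (vec2 (m,j) (i,l)) (vec2 (i,j) (m,l)) ↔
      ((po (m,j) (i,j) ∧ po (i,l) (i,j)) ∨ (po (m,j) (m,l) ∧ po (i,l) (m,l))) :=
    lexLt_vec2_iff hpo (pt_ne (Or.inl (by omega))) (pt_ne (Or.inr (by omega)))
      (pt_ne (Or.inr (by omega))) (pt_ne (Or.inl (by omega))) (pt_ne (Or.inl (by omega)))
  have hiff4 : lexLt po (vec2 (i,n) (k,j)) (vec2 (i,j) (k,n)) ↔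
      ((po (i,n) (i,j) ∧ po (k,j) (i,j)) ∨ (po (i,n) (k,n) ∧ po (k,j) (k,n))) :=
    lexLt_vec2_iff hpo (pt_ne (Or.inr (by omega))) (pt_ne (Or.inl (by omega)))
      (pt_ne (Or.inl (by omega))) (pt_ne (Or.inr (by omega))) (pt_ne (Or.inl (by omega)))
  rcases lexLt_total hpo (mono3 (i,j) (m,l) (k,n)) (mono3 (m,n) (i,l) (k,j)) with heq12 | hL12 | hL21
  · exact absurd heq12 hM12
  · -- in(sp) = x_α x_c x_d : cases (1) and (2)
    have hnot21 : ¬ lexLt po (mono3 ((m,n) : Pt) (i,l) (k,j)) (mono3 (i,j) (m,l) (k,n)) :=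
      fun h' => lexLt_asymm hpo h' hL12
    have hLMsp : IsLM po (MvPolynomial.monomial (mono3 (i,j) (m,l) (k,n)) (1 : K) -
        MvPolynomial.monomial (mono3 (m,n) (i,l) (k,j)) 1) (mono3 (m,n) (i,l) (k,j)) :=
      isLM_binom' hpo hL12
    constructor
    · intro hred
      have key : lexLt po (vec2 (m,j) (k,n)) (vec2 (m,n) (k,j)) ∨
          lexLt po (vec2 (i,n) (m,l)) (vec2 (i,l) (m,n)) := by
        by_contra hcon
        push_neg at hcon
        have hgt1 : lexLt po (vec2 (m,n) (k,j)) (vec2 (m,j) (k,n)) := by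
          rcases lexLt_total hpo (vec2 (m,j) (k,n)) (vec2 (m,n) (k,j)) with e | h' | h'
          · exact absurd e (vec2_ne (pt_ne (Or.inr (by omega))) (pt_ne (Or.inl (by omega))))
          · exact absurd h' hcon.1
          · exact h'
        have hgt2 : lexLt po (vec2 (i,l) (m,n)) (vec2 (i,n) (m,l)) := by
          rcases lexLt_total hpo (vec2 (i,n) (m,l)) (vec2 (i,l) (m,n)) with e | h' | h'
          · exact absurd e (vec2_ne (pt_ne (Or.inr (by omega))) (pt_ne (Or.inl (by omega))))
          · exact absurd h' hcon.2
          · exact h'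
        have hclass : ∀ x ∈ minorsSet K P, ∀ mx, IsLM po x mx →
            (∀ w', mx w' ≤ mono3 (m,n) (i,l) (k,j) w') → False := by
          intro x hxG mx hmx hdvd
          obtain ⟨u, v, hIuv, rfl⟩ := hxG
          have hc1 : u.1 < v.1 := hIuv.1
          have hc2 : u.2 < v.2 := hIuv.2.1
          have hbin : innerMinor K u v = MvPolynomial.monomial (vec2 u v) 1 -
              MvPolynomial.monomial (vec2 (u.1, v.2) (v.1, u.2)) 1 := innerMinor_eq _ _
          have hnuv : vec2 u v ≠ vec2 (u.1, v.2) (v.1, u.2) := by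
            apply vec2_ne
            · intro e
              have h9 := congrArg Prod.snd e
              exact ne_of_lt hc2 h9
            · intro e
              have h9 := congrArg Prod.fst e
              exact ne_of_lt hc1 h9
          rcases isLM_binom_cases hnuv (hbin ▸ hmx) with e | e
          · have hu3 : u = ((m,n) : Pt) ∨ u = ((i,l) : Pt) ∨ u = ((k,j) : Pt) :=
              mono3_pos (lt_of_lt_of_le
                (by rw [vec2_apply u v u, if_pos rfl]; omega) (e ▸ hdvd u))
            have hv3 : v = ((m,n) : Pt) ∨ v = ((i,l) : Pt) ∨ v = ((k,j) : Pt) :=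
              mono3_pos (lt_of_lt_of_le
                (by rw [vec2_apply u v v]; have : (if v = v then 1 else 0) = 1 := if_pos rfl; omega)
                (e ▸ hdvd v))
            rcases hu3 with e1 | e1 | e1 <;> rcases hv3 with e2 | e2 | e2 <;>
              rw [Prod.ext_iff] at e1 e2 <;> simp only [Prod.fst, Prod.snd] at e1 e2 <;> omega
          · have hs3 : ((u.1, v.2) : Pt) = ((m,n) : Pt) ∨ ((u.1, v.2) : Pt) = ((i,l) : Pt) ∨
                ((u.1, v.2) : Pt) = ((k,j) : Pt) :=
              mono3_pos (lt_of_lt_of_le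
                (by rw [vec2_apply (u.1,v.2) (v.1,u.2) (u.1,v.2), if_pos rfl]; omega)
                (e ▸ hdvd (u.1, v.2)))
            have ht3 : ((v.1, u.2) : Pt) = ((m,n) : Pt) ∨ ((v.1, u.2) : Pt) = ((i,l) : Pt) ∨
                ((v.1, u.2) : Pt) = ((k,j) : Pt) :=
              mono3_pos (lt_of_lt_of_le
                (by rw [vec2_apply (u.1,v.2) (v.1,u.2) (v.1,u.2)];
                    have : (if (v.1,u.2) = ((v.1,u.2) : Pt) then 1 else 0) = 1 := if_pos rfl; omega)
                (e ▸ hdvd (v.1, u.2)))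
            rcases hs3 with e1 | e1 | e1 <;> rcases ht3 with e2 | e2 | e2 <;>
              rw [Prod.mk.injEq] at e1 e2
            · omega
            · omega
            · -- {α, d} : the minor of [h, δ]
              have hu : u = ((m,j) : Pt) := Prod.ext e1.1 e2.2
              have hv : v = ((k,n) : Pt) := Prod.ext e2.1 e1.2
              subst hu; subst hv
              exact lexLt_irrefl (lexLt_of_lt_of_le hpo hgt1
                (e ▸ hmx.2 _ (by rw [hbin, support_binom hnuv]; simp)))
            · -- {c, α} : the minor of [r, γ]
              have hu : u = ((i,n) : Pt) := Prod.ext e1.1 e2.2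
              have hv : v = ((m,l) : Pt) := Prod.ext e2.1 e1.2
              subst hu; subst hv
              exact lexLt_irrefl (lexLt_of_lt_of_le hpo hgt2
                (e ▸ hmx.2 _ (by rw [hbin, support_binom hnuv]; simp)))
            · omega
            · -- {c, d} : the minor of [a, b]
              have hu : u = ((i,j) : Pt) := Prod.ext e1.1 e2.2
              have hv : v = ((k,l) : Pt) := Prod.ext e2.1 e1.2
              subst hu; subst hv
              exact lexLt_irrefl (lexLt_of_lt_of_le hpo hcd
                (e ▸ hmx.2 _ (by rw [hbin, support_binom hnuv]; simp)))
            · omega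
            · omega
            · omega
        exact not_reduces hpo hLMsp hclass hred
      rcases key with hk | hk
      · exact Or.inl ⟨hL12, hiff1.1 hk⟩
      · refine Or.inr (Or.inl ⟨hL12, hcorn, hiff2.1 ?_⟩)
        rw [vec2_comm (i,l) (m,n)] at hk
        exact hk
    · rintro (⟨h12, hpq⟩ | ⟨h12, -, hpq⟩ | ⟨h21, -⟩ | ⟨h21, -, -⟩)
      · -- condition (1)
        have hlex1 : lexLt po (vec2 (m,j) (k,n)) (vec2 (m,n) (k,j)) := hiff1.2 hpq
        refine reduces_of_two hpo hGaγ hGhδ hne12 hbin_aγ hbin_hδ n_aγ n_hδ hLMsp hid1 ?_ ?_ ?_ ?_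
        · rw [add_comm, ← mono3_eq_vec2_add]
          exact Or.inr hL12
        · rw [add_comm, ← mono3_eq_vec2_add, mono3_rot (i,l) (m,j) (k,n),
            mono3_comm23 (m,n) (i,l) (k,j)]
          exact Or.inr (lexLt_add_right hpo _ hlex1)
        · rw [add_comm, ← mono3_eq_vec2_add, mono3_comm23 (m,n) (i,l) (k,j)]
          exact Or.inr (lexLt_add_right hpo _ hlex1)
        · rw [add_comm, ← mono3_eq_vec2_add, mono3_comm23 (m,n) (k,j) (i,l)]
          exact lexLe_refl _
      · -- condition (2)
        have hlex2 : lexLt po (vec2 (i,n) (m,l)) (vec2 (m,n) (i,l)) := hiff2.2 hpq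
        refine reduces_of_two hpo hGaδ hGrγ hne34 hbin_aδ hbin_rγ n_aδ n_rγ hLMsp hid2 ?_ ?_ ?_ ?_
        · rw [add_comm, ← mono3_eq_vec2_add, ← mono3_comm23 (i,j) (m,l) (k,n)]
          exact Or.inr hL12
        · rw [add_comm, ← mono3_eq_vec2_add, mono3_comm23 (i,n) (k,j) (m,l)]
          exact Or.inr (lexLt_add_right hpo _ hlex2)
        · rw [add_comm, ← mono3_eq_vec2_add]
          exact Or.inr (lexLt_add_right hpo _ hlex2)
        · rw [add_comm, ← mono3_eq_vec2_add, mono3_comm12 (i,l) (m,n) (k,j)]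
          exact lexLe_refl _
      · exact absurd h21 hnot21
      · exact absurd h21 hnot21
  · -- in(sp) = x_a x_γ x_δ : cases (3) and (4)
    have hnot12 : ¬ lexLt po (mono3 ((i,j) : Pt) (m,l) (k,n)) (mono3 (m,n) (i,l) (k,j)) :=
      fun h' => lexLt_asymm hpo h' hL21
    have hLMsp : IsLM po (MvPolynomial.monomial (mono3 (i,j) (m,l) (k,n)) (1 : K) -
        MvPolynomial.monomial (mono3 (m,n) (i,l) (k,j)) 1) (mono3 (i,j) (m,l) (k,n)) :=
      isLM_binom hpo hL21
    constructor
    · intro hred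
      have key : lexLt po (vec2 (i,l) (m,j)) (vec2 (i,j) (m,l)) ∨
          lexLt po (vec2 (i,n) (k,j)) (vec2 (i,j) (k,n)) := by
        by_contra hcon
        push_neg at hcon
        have hgt1 : lexLt po (vec2 (i,j) (m,l)) (vec2 (i,l) (m,j)) := by
          rcases lexLt_total hpo (vec2 (i,l) (m,j)) (vec2 (i,j) (m,l)) with e | h' | h'
          · exact absurd e (vec2_ne (pt_ne (Or.inr (by omega))) (pt_ne (Or.inl (by omega))))
          · exact absurd h' hcon.1
          · exact h'
        have hgt2 : lexLt po (vec2 (i,j) (k,n)) (vec2 (i,n) (k,j)) := by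
          rcases lexLt_total hpo (vec2 (i,n) (k,j)) (vec2 (i,j) (k,n)) with e | h' | h'
          · exact absurd e (vec2_ne (pt_ne (Or.inr (by omega))) (pt_ne (Or.inl (by omega))))
          · exact absurd h' hcon.2
          · exact h'
        have hclass : ∀ x ∈ minorsSet K P, ∀ mx, IsLM po x mx →
            (∀ w', mx w' ≤ mono3 (i,j) (m,l) (k,n) w') → False := by
          intro x hxG mx hmx hdvd
          obtain ⟨u, v, hIuv, rfl⟩ := hxG
          have hc1 : u.1 < v.1 := hIuv.1
          have hc2 : u.2 < v.2 := hIuv.2.1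
          have hbin : innerMinor K u v = MvPolynomial.monomial (vec2 u v) 1 -
              MvPolynomial.monomial (vec2 (u.1, v.2) (v.1, u.2)) 1 := innerMinor_eq _ _
          have hnuv : vec2 u v ≠ vec2 (u.1, v.2) (v.1, u.2) := by
            apply vec2_ne
            · intro e
              have h9 := congrArg Prod.snd e
              exact ne_of_lt hc2 h9
            · intro e
              have h9 := congrArg Prod.fst e
              exact ne_of_lt hc1 h9
          rcases isLM_binom_cases hnuv (hbin ▸ hmx) with e | e
          · have hu3 : u = ((i,j) : Pt) ∨ u = ((m,l) : Pt) ∨ u = ((k,n) : Pt) :=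
              mono3_pos (lt_of_lt_of_le
                (by rw [vec2_apply u v u, if_pos rfl]; omega) (e ▸ hdvd u))
            have hv3 : v = ((i,j) : Pt) ∨ v = ((m,l) : Pt) ∨ v = ((k,n) : Pt) :=
              mono3_pos (lt_of_lt_of_le
                (by rw [vec2_apply u v v]; have : (if v = v then 1 else 0) = 1 := if_pos rfl; omega)
                (e ▸ hdvd v))
            rcases hu3 with e1 | e1 | e1 <;> rcases hv3 with e2 | e2 | e2
            · rw [Prod.ext_iff] at e1 e2; omega
            · -- [a, γ]
              subst e1; subst e2
              exact lexLt_irrefl (lexLt_of_lt_of_le hpo hgt1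
                (e ▸ hmx.2 _ (by rw [hbin, support_binom hnuv]; simp)))
            · -- [a, δ]
              subst e1; subst e2
              exact lexLt_irrefl (lexLt_of_lt_of_le hpo hgt2
                (e ▸ hmx.2 _ (by rw [hbin, support_binom hnuv]; simp)))
            · rw [Prod.ext_iff] at e1 e2; omega
            · rw [Prod.ext_iff] at e1 e2; omega
            · rw [Prod.ext_iff] at e1 e2; omega
            · rw [Prod.ext_iff] at e1 e2; omega
            · rw [Prod.ext_iff] at e1 e2; omega
            · rw [Prod.ext_iff] at e1 e2; omega
          · have hs3 : ((u.1, v.2) : Pt) = ((i,j) : Pt) ∨ ((u.1, v.2) : Pt) = ((m,l) : Pt) ∨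
                ((u.1, v.2) : Pt) = ((k,n) : Pt) :=
              mono3_pos (lt_of_lt_of_le
                (by rw [vec2_apply (u.1,v.2) (v.1,u.2) (u.1,v.2), if_pos rfl]; omega)
                (e ▸ hdvd (u.1, v.2)))
            have ht3 : ((v.1, u.2) : Pt) = ((i,j) : Pt) ∨ ((v.1, u.2) : Pt) = ((m,l) : Pt) ∨
                ((v.1, u.2) : Pt) = ((k,n) : Pt) :=
              mono3_pos (lt_of_lt_of_le
                (by rw [vec2_apply (u.1,v.2) (v.1,u.2) (v.1,u.2)];
                    have : (if (v.1,u.2) = ((v.1,u.2) : Pt) then 1 else 0) = 1 := if_pos rfl; omega)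
                (e ▸ hdvd (v.1, u.2)))
            rcases hs3 with e1 | e1 | e1 <;> rcases ht3 with e2 | e2 | e2 <;>
              rw [Prod.mk.injEq] at e1 e2
            · omega
            · omega
            · omega
            · omega
            · omega
            · -- {γ, δ} : the minor of [α, b]
              have hu : u = ((m,n) : Pt) := Prod.ext e1.1 e2.2
              have hv : v = ((k,l) : Pt) := Prod.ext e2.1 e1.2
              subst hu; subst hv
              exact lexLt_irrefl (lexLt_of_lt_of_le hpo hγδ
                (e ▸ hmx.2 _ (by rw [hbin, support_binom hnuv]; simp)))
            · omega
            · omega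
            · omega
        exact not_reduces hpo hLMsp hclass hred
      rcases key with hk | hk
      · refine Or.inr (Or.inr (Or.inl ⟨hL21, hiff3.1 ?_⟩))
        rw [vec2_comm (m,j) (i,l)]
        exact hk
      · exact Or.inr (Or.inr (Or.inr ⟨hL21, hcorn, hiff4.1 hk⟩))
    · rintro (⟨h12, -⟩ | ⟨h12, -, -⟩ | ⟨h21, hpq⟩ | ⟨h21, -, hpq⟩)
      · exact absurd h12 hnot12
      · exact absurd h12 hnot12
      · -- condition (3)
        have hlex3 : lexLt po (vec2 (i,l) (m,j)) (vec2 (i,j) (m,l)) := by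
          rw [vec2_comm (i,l) (m,j)]
          exact hiff3.2 hpq
        refine reduces_of_two hpo hGaγ hGhδ hne12 hbin_aγ hbin_hδ n_aγ n_hδ hLMsp hid1 ?_ ?_ ?_ ?_
        · rw [add_comm, ← mono3_eq_vec2_add]
          exact lexLe_refl _
        · rw [add_comm, ← mono3_eq_vec2_add]
          exact Or.inr (lexLt_add_right hpo _ hlex3)
        · rw [add_comm, ← mono3_eq_vec2_add, mono3_rot (m,j) (k,n) (i,l),
            mono3_rot (k,n) (i,l) (m,j)]
          exact Or.inr (lexLt_add_right hpo _ hlex3)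
        · rw [add_comm, ← mono3_eq_vec2_add, mono3_comm23 (m,n) (k,j) (i,l)]
          exact Or.inr hL21
      · -- condition (4)
        have hlex4 : lexLt po (vec2 (i,n) (k,j)) (vec2 (i,j) (k,n)) := hiff4.2 hpq
        refine reduces_of_two hpo hGaδ hGrγ hne34 hbin_aδ hbin_rγ n_aδ n_rγ hLMsp hid2 ?_ ?_ ?_ ?_
        · rw [add_comm, ← mono3_eq_vec2_add, mono3_comm23 (i,j) (k,n) (m,l)]
          exact lexLe_refl _
        · rw [add_comm, ← mono3_eq_vec2_add, mono3_comm23 (i,j) (m,l) (k,n)]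
          exact Or.inr (lexLt_add_right hpo _ hlex4)
        · rw [add_comm, ← mono3_eq_vec2_add, mono3_comm23 (i,n) (m,l) (k,j),
            mono3_comm23 (i,j) (m,l) (k,n)]
          exact Or.inr (lexLt_add_right hpo _ hlex4)
        · rw [add_comm, ← mono3_eq_vec2_add, mono3_comm12 (i,l) (m,n) (k,j)]
          exact Or.inr hL21


end ClosedPathPaper
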